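/- There exists λ > 0 and a Borel probability measure M on X such that L_{-βc}* M = λ M, where L_{-βc}* is the dual of the Haar-Ruelle operator acting on measures; moreover one can take λ = ∫ L_{-βc}(1) dM. -/

import Mathlib

open MeasureTheory ENNReal Filter Topology

/-- Concatenation `j * x = (j, x₁, x₂, …)` on `X = {1,…,d}^ℕ`. -/
def cons {d : ℕ} (j : Fin d) (x : ℕ → Fin d) : ℕ → Fin d :=
  fun n => match n with
  | 0 => j
  | Nat.succ m => x m

/-- The Haar-Ruelle operator. -/
noncomputable def haarRuelle {d k : ℕ} (ψ : (ℕ → Fin d) → Fin k → (ℕ → Fin d))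
    (c : (ℕ → Fin d) → (ℕ → Fin d) → ℝ) (β : ℝ)
    (f : (ℕ → Fin d) → ℝ) (x : ℕ → Fin d) : ℝ :=
  (1 / d) * ∑ j : Fin d, ∑ i : Fin k,
    f (ψ (cons j x) i) * Real.exp (-β * c (cons j x) (ψ (cons j x) i))


namespace HRaux

/-- cylinder set -/
def cyl {d : ℕ} (n : ℕ) (v : Fin n → Fin d) : Set (ℕ → Fin d) :=
  (fun (y : ℕ → Fin d) (m : Fin n) => y (m : ℕ)) ⁻¹' {v}

lemma continuous_res {d n : ℕ} : Continuous (fun (y : ℕ → Fin d) (m : Fin n) => y (m : ℕ)) := by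
  exact continuous_pi fun m => continuous_apply _

lemma isOpen_cyl {d n : ℕ} (v : Fin n → Fin d) : IsOpen (cyl n v) :=
  (isOpen_discrete _).preimage continuous_res

lemma isClosed_cyl {d n : ℕ} (v : Fin n → Fin d) : IsClosed (cyl n v) :=
  (isClosed_discrete _).preimage continuous_res

lemma measurableSet_cyl {d n : ℕ} (v : Fin n → Fin d) : MeasurableSet (cyl n v) :=
  (isOpen_cyl v).measurableSet

lemma isCompact_cyl {d n : ℕ} (v : Fin n → Fin d) : IsCompact (cyl n v) :=
  (isClosed_cyl v).isCompact

lemma mem_cyl_iff {d n : ℕ} (v : Fin n → Fin d) (y : ℕ → Fin d) :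
    y ∈ cyl n v ↔ ∀ m : Fin n, y (m : ℕ) = v m := by
  simp [cyl, funext_iff]

lemma cyl_disjoint {d n : ℕ} : Pairwise (Function.onFun Disjoint (fun v : Fin n → Fin d => cyl n v)) := by
  intro v v' hvv'
  simp only [Function.onFun, Set.disjoint_left]
  intro y hy hy'
  rw [mem_cyl_iff] at hy hy'
  exact hvv' (funext fun m => (hy m).symm.trans (hy' m))

lemma cyl_iUnion {d n : ℕ} : (⋃ v : Fin n → Fin d, cyl n v) = Set.univ := by
  ext y
  simp only [Set.mem_iUnion, Set.mem_univ, iff_true]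
  exact ⟨fun m => y m, by rw [mem_cyl_iff]; intro m; rfl⟩

lemma cyl_nonempty {d n : ℕ} (hd : 0 < d) (v : Fin n → Fin d) : (cyl n v).Nonempty := by
  refine ⟨fun m => if h : m < n then v ⟨m, h⟩ else ⟨0, hd⟩, ?_⟩
  rw [mem_cyl_iff]
  intro m
  simp [m.isLt]

/-- cylinders around x form a neighborhood basis (weak form) -/
lemma exists_cyl_subset {d : ℕ} {U : Set (ℕ → Fin d)} (hU : IsOpen U) {x : ℕ → Fin d}
    (hx : x ∈ U) : ∃ n : ℕ, {y : ℕ → Fin d | ∀ m < n, y m = x m} ⊆ U := by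
  rcases (isOpen_pi_iff.1 hU) x hx with ⟨I, u, hIu, hsub⟩
  rcases I.bddAbove with ⟨N, hN⟩
  refine ⟨N + 1, fun y hy => hsub ?_⟩
  intro a ha
  have : y a = x a := hy a (Nat.lt_succ_of_le (hN ha))
  rw [this]
  exact (hIu a ha).2

/-- uniform cylinder approximation of a continuous function -/
lemma exists_osc_le {d : ℕ} {f : (ℕ → Fin d) → ℝ} (hf : Continuous f) {ε : ℝ} (hε : 0 < ε) :
    ∃ n : ℕ, ∀ v : Fin n → Fin d, ∀ y ∈ cyl n v, ∀ z ∈ cyl n v, |f y - f z| ≤ ε := by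
  -- for each x, choose n_x with osc ≤ ε/2 on the cylinder around x
  have key : ∀ x : ℕ → Fin d, ∃ n : ℕ,
      ∀ y ∈ {y : ℕ → Fin d | ∀ m < n, y m = x m}, |f y - f x| ≤ ε / 2 := by
    intro x
    have : IsOpen (f ⁻¹' Metric.ball (f x) (ε/2)) := (Metric.isOpen_ball).preimage hf
    have hxmem : x ∈ f ⁻¹' Metric.ball (f x) (ε/2) := by
      simp only [Set.mem_preimage, Metric.mem_ball, dist_self]
      positivity
    rcases exists_cyl_subset this hxmem with ⟨n, hn⟩
    exact ⟨n, fun y hy => by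
      have := hn hy
      simp only [Set.mem_preimage, Metric.mem_ball, Real.dist_eq] at this
      exact le_of_lt this⟩
  choose nx hnx using key
  -- cover X by the open cylinders, extract finite subcover
  have hcov : (Set.univ : Set (ℕ → Fin d)) ⊆
      ⋃ x : ℕ → Fin d, {y : ℕ → Fin d | ∀ m < nx x, y m = x m} := by
    intro x _
    exact Set.mem_iUnion.2 ⟨x, fun m _ => rfl⟩
  have hopen : ∀ x : ℕ → Fin d, IsOpen {y : ℕ → Fin d | ∀ m < nx x, y m = x m} := by
    intro x
    have : {y : ℕ → Fin d | ∀ m < nx x, y m = x m}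
        = cyl (nx x) (fun m => x (m : ℕ)) := by
      ext y; simp [mem_cyl_iff]
      constructor
      · intro h m; exact h m m.isLt
      · intro h m hm; exact h ⟨m, hm⟩
    rw [this]; exact isOpen_cyl _
  rcases isCompact_univ.elim_finite_subcover _ hopen hcov with ⟨s, hs⟩
  rcases s.eq_empty_or_nonempty with rfl | hne
  · -- s empty: impossible unless space empty; handle: then univ ⊆ ∅
    by_cases hX : Nonempty (ℕ → Fin d)
    · exfalso
      rcases hX with ⟨x⟩
      simpa using hs (Set.mem_univ x)
    · exact ⟨0, fun v y hy => absurd ⟨y⟩ hX⟩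
  · refine ⟨s.sup' hne nx, fun v y hy z hz => ?_⟩
    rcases Set.mem_iUnion₂.1 (hs (Set.mem_univ y)) with ⟨x, hxs, hyx⟩
    have hnle : nx x ≤ s.sup' hne nx := Finset.le_sup' _ hxs
    have hzx : z ∈ {y : ℕ → Fin d | ∀ m < nx x, y m = x m} := by
      intro m hm
      have hlt : m < s.sup' hne nx := lt_of_lt_of_le hm hnle
      have hym : y m = v ⟨m, hlt⟩ := (mem_cyl_iff _ _).1 hy ⟨m, hlt⟩
      have hzm : z m = v ⟨m, hlt⟩ := (mem_cyl_iff _ _).1 hz ⟨m, hlt⟩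
      rw [hzm, ← hym]
      exact hyx m hm
    have h1 := hnx x y hyx
    have h2 := hnx x z hzx
    calc |f y - f z| = |(f y - f x) - (f z - f x)| := by ring_nf
      _ ≤ |f y - f x| + |f z - f x| := abs_sub _ _
      _ ≤ ε/2 + ε/2 := add_le_add h1 h2
      _ = ε := by ring



lemma cont_integrable {d : ℕ} {f : (ℕ → Fin d) → ℝ} (hf : Continuous f)
    (μ : Measure (ℕ → Fin d)) [IsFiniteMeasure μ] : Integrable f μ :=
  BoundedContinuousFunction.integrable μ (BoundedContinuousFunction.mkOfCompact ⟨f, hf⟩)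

lemma sum_toReal_cyl {d n : ℕ} (μ : Measure (ℕ → Fin d)) [IsProbabilityMeasure μ] :
    ∑ v : Fin n → Fin d, (μ (HRaux.cyl n v)).toReal = 1 := by
  have h1 : μ (⋃ v : Fin n → Fin d, cyl n v) = ∑' v, μ (cyl n v) :=
    measure_iUnion cyl_disjoint (fun v => measurableSet_cyl v)
  rw [cyl_iUnion, measure_univ, tsum_fintype] at h1
  have := congrArg ENNReal.toReal h1
  rw [ENNReal.toReal_sum (fun v _ => measure_ne_top μ _)] at this
  simpa using this.symm

lemma integral_approx {d n : ℕ} (μ : Measure (ℕ → Fin d)) [IsProbabilityMeasure μ]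
    {f : (ℕ → Fin d) → ℝ} (hf : Continuous f) {ε : ℝ} (hε : 0 < ε)
    (hosc : ∀ v : Fin n → Fin d, ∀ y ∈ cyl n v, ∀ z ∈ cyl n v, |f y - f z| ≤ ε)
    (pt : (Fin n → Fin d) → (ℕ → Fin d)) (hpt : ∀ v, pt v ∈ cyl n v) :
    |∫ x, f x ∂μ - ∑ v : Fin n → Fin d, f (pt v) * (μ (cyl n v)).toReal| ≤ ε := by
  have hint : Integrable f μ := cont_integrable hf μ
  have hsplit : ∫ x, f x ∂μ = ∑ v : Fin n → Fin d, ∫ x in cyl n v, f x ∂μ := by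
    have := integral_iUnion (μ := μ) (f := f) (fun v : Fin n → Fin d => measurableSet_cyl v)
      cyl_disjoint (by rw [cyl_iUnion]; exact hint.integrableOn)
    rw [cyl_iUnion] at this
    simpa [tsum_fintype] using this
  rw [hsplit, ← Finset.sum_sub_distrib]
  calc |∑ v : Fin n → Fin d, (∫ x in cyl n v, f x ∂μ - f (pt v) * (μ (cyl n v)).toReal)|
      ≤ ∑ v : Fin n → Fin d, |∫ x in cyl n v, f x ∂μ - f (pt v) * (μ (cyl n v)).toReal| :=
        Finset.abs_sum_le_sum_abs _ _
    _ ≤ ∑ v : Fin n → Fin d, ε * (μ (cyl n v)).toReal := by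
        apply Finset.sum_le_sum
        intro v _
        have h1 : ∫ x in cyl n v, f x ∂μ - f (pt v) * (μ (cyl n v)).toReal
            = ∫ x in cyl n v, (f x - f (pt v)) ∂μ := by
          rw [integral_sub hint.integrableOn (integrableOn_const (measure_ne_top μ _))]
          rw [setIntegral_const, smul_eq_mul, measureReal_def]
          ring
        rw [h1]
        have := norm_setIntegral_le_of_norm_le_const (μ := μ) (s := cyl n v)
          (f := fun x => f x - f (pt v)) (C := ε) (measure_lt_top μ _)
          (fun x hx => by simpa [Real.norm_eq_abs] using hosc v x hx (pt v) (hpt v))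
        simpa [Real.norm_eq_abs, measureReal_def] using this
    _ = ε := by rw [← Finset.mul_sum, sum_toReal_cyl μ, mul_one]



lemma ulim_exists {α : Type*} [TopologicalSpace α] [CompactSpace α] (U : Ultrafilter ℕ)
    (u : ℕ → α) : ∃ ℓ, Tendsto u ↑U (𝓝 ℓ) := by
  rcases isCompact_univ.ultrafilter_le_nhds (U.map u) (by simp) with ⟨x, _, hx⟩
  exact ⟨x, by
    have : Filter.map u ↑U ≤ 𝓝 x := by rwa [← Ultrafilter.coe_map]
    exact this⟩

lemma exists_weakLimit {d : ℕ} (hd : 0 < d) (U : Ultrafilter ℕ)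
    (P : ℕ → Measure (ℕ → Fin d)) (hP : ∀ j, IsProbabilityMeasure (P j)) :
    ∃ M : Measure (ℕ → Fin d), IsProbabilityMeasure M ∧
      ∀ f : (ℕ → Fin d) → ℝ, Continuous f →
        Tendsto (fun j => ∫ x, f x ∂P j) ↑U (𝓝 (∫ x, f x ∂M)) := by
  choose Q hQ using fun A : Set (ℕ → Fin d) => ulim_exists U (fun j => P j A)
  have hQ_le_one : ∀ A, Q A ≤ 1 := by
    intro A
    refine le_of_tendsto (hQ A) (Eventually.of_forall fun j => ?_)
    exact (hP j).measure_univ ▸ measure_mono (Set.subset_univ A)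
  have hQ_ne_top : ∀ A, Q A ≠ ∞ := fun A => ne_top_of_le_ne_top one_ne_top (hQ_le_one A)
  have hQ_univ : Q Set.univ = 1 := by
    refine tendsto_nhds_unique (hQ _) ?_
    simp only [fun j => (hP j).measure_univ]
    exact tendsto_const_nhds
  have hQ_mono : ∀ {A B}, A ⊆ B → Q A ≤ Q B := by
    intro A B h
    exact le_of_tendsto_of_tendsto' (hQ A) (hQ B) (fun j => measure_mono h)
  have hQ_add : ∀ {A B}, Disjoint A B → MeasurableSet B → Q (A ∪ B) = Q A + Q B := by
    intro A B hAB hB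
    refine tendsto_nhds_unique (hQ _) ?_
    have : Tendsto (fun j => P j A + P j B) ↑U (𝓝 (Q A + Q B)) := (hQ A).add (hQ B)
    exact this.congr (fun j => (measure_union hAB hB).symm)
  have hQ_subadd : ∀ A B, Q (A ∪ B) ≤ Q A + Q B := by
    intro A B
    exact le_of_tendsto_of_tendsto' (hQ _) ((hQ A).add (hQ B)) (fun j => measure_union_le _ _)
  set cont : Content (ℕ → Fin d) :=
    { toFun := fun K => (Q K).toNNReal
      mono' := fun K1 K2 h =>
        (ENNReal.toNNReal_le_toNNReal (hQ_ne_top _) (hQ_ne_top _)).2 (hQ_mono h)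
      sup_disjoint' := by
        intro K1 K2 hdisj h1 h2
        have : Q ((K1 : Set (ℕ → Fin d)) ∪ K2) = Q K1 + Q K2 :=
          hQ_add hdisj h2.measurableSet
        show (Q ((K1 ⊔ K2 : TopologicalSpace.Compacts (ℕ → Fin d)) : Set (ℕ → Fin d))).toNNReal = _
        rw [TopologicalSpace.Compacts.coe_sup, this]
        exact ENNReal.toNNReal_add (hQ_ne_top _) (hQ_ne_top _)
      sup_le' := by
        intro K1 K2
        have h := hQ_subadd (K1 : Set (ℕ → Fin d)) K2
        have := (ENNReal.toNNReal_le_toNNReal (hQ_ne_top _)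
          (by exact ENNReal.add_ne_top.2 ⟨hQ_ne_top _, hQ_ne_top _⟩)).2 h
        show (Q ((K1 ⊔ K2 : TopologicalSpace.Compacts (ℕ → Fin d)) : Set (ℕ → Fin d))).toNNReal ≤ _
        calc (Q ((K1 ⊔ K2 : TopologicalSpace.Compacts (ℕ → Fin d)) : Set (ℕ → Fin d))).toNNReal
            = (Q ((K1 : Set (ℕ → Fin d)) ∪ K2)).toNNReal := by
              rw [TopologicalSpace.Compacts.coe_sup]
          _ ≤ (Q (K1 : Set (ℕ → Fin d)) + Q (K2 : Set (ℕ → Fin d))).toNNReal := this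
          _ = _ := ENNReal.toNNReal_add (hQ_ne_top _) (hQ_ne_top _) }
  set M : Measure (ℕ → Fin d) := cont.measure with hM
  have hkey : ∀ S : Set (ℕ → Fin d), IsCompact S → IsOpen S → M S = Q S := by
    intro S hSc hSo
    rw [hM, Content.measure_apply _ hSo.measurableSet,
      cont.outerMeasure_of_isOpen S hSo, cont.innerContent_of_isCompact hSc hSo]
    exact ENNReal.coe_toNNReal (hQ_ne_top _)
  have hMprob : IsProbabilityMeasure M :=
    ⟨by rw [hkey _ isCompact_univ isOpen_univ, hQ_univ]⟩
  refine ⟨M, hMprob, ?_⟩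
  intro f hf
  rw [Metric.tendsto_nhds]
  intro ε hε
  have hε4 : 0 < ε / 4 := by positivity
  rcases exists_osc_le hf hε4 with ⟨n, hosc⟩
  set pt : (Fin n → Fin d) → (ℕ → Fin d) := fun v => (cyl_nonempty hd v).choose with hpt_def
  have hpt : ∀ v, pt v ∈ cyl n v := fun v => (cyl_nonempty hd v).choose_spec
  set SM : ℝ := ∑ v : Fin n → Fin d, f (pt v) * (M (cyl n v)).toReal with hSM
  set SP : ℕ → ℝ := fun j => ∑ v : Fin n → Fin d, f (pt v) * (P j (cyl n v)).toReal with hSP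
  have hMa : |∫ x, f x ∂M - SM| ≤ ε / 4 := integral_approx M hf hε4 hosc pt hpt
  have hPa : ∀ j, |∫ x, f x ∂P j - SP j| ≤ ε / 4 := by
    intro j
    haveI := hP j
    exact integral_approx (P j) hf hε4 hosc pt hpt
  have hsum : Tendsto SP ↑U (𝓝 SM) := by
    rw [hSP, hSM]
    apply tendsto_finset_sum
    intro v _
    have h1 : Tendsto (fun j => (P j (cyl n v)).toReal) ↑U (𝓝 ((Q (cyl n v)).toReal)) :=
      (ENNReal.tendsto_toReal (hQ_ne_top _)).comp (hQ _)
    rw [hkey _ (isCompact_cyl v) (isOpen_cyl v)]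
    exact h1.const_mul _
  have hev : ∀ᶠ j in ↑U, |SP j - SM| < ε / 4 := by
    have := Metric.tendsto_nhds.1 hsum (ε / 4) hε4
    simpa [Real.dist_eq] using this
  filter_upwards [hev] with j hj
  rw [Real.dist_eq]
  have h1 := hPa j
  have t1 : |∫ x, f x ∂P j - ∫ x, f x ∂M| ≤ |∫ x, f x ∂P j - SP j| + |SP j - ∫ x, f x ∂M| :=
    abs_sub_le _ _ _
  have t2 : |SP j - ∫ x, f x ∂M| ≤ |SP j - SM| + |SM - ∫ x, f x ∂M| := abs_sub_le _ _ _
  have hMa' : |SM - ∫ x, f x ∂M| ≤ ε / 4 := by rw [abs_sub_comm]; exact hMa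
  linarith

section SeqLemma

variable {a : ℕ → ℝ} {δ C : ℝ}

set_option maxHeartbeats 1000000 in
lemma seq_lemma (hδ : 0 < δ) (ha0 : a 0 = 1) (hpos : ∀ n, 0 < a n)
    (hlow : ∀ n, δ * a n ≤ a (n + 1)) (hhigh : ∀ n, a (n + 1) ≤ C * a n) :
    ∃ lam : ℝ, δ ≤ lam ∧ lam ≤ C ∧
      ∀ ε : ℝ, 0 < ε → ∀ B : ℝ, ∃ (x : ℝ) (N : ℕ),
        0 < x ∧ x ≤ lam ∧ lam - x ≤ ε * lam ∧
        B ≤ (∑ m ∈ Finset.range (N + 1), a m / x ^ m) ∧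
        a (N + 1) / x ^ (N + 1) ≤ ε * ∑ m ∈ Finset.range (N + 1), a m / x ^ m := by
  have hC : 0 < C := by
    have h := hhigh 0
    simp [ha0] at h
    linarith [hpos 1]
  -- the set of exponential upper bounds
  set S : Set ℝ := {s : ℝ | 0 < s ∧ ∃ K : ℝ, 0 < K ∧ ∀ n, a n ≤ K * s ^ n} with hS
  have haC : ∀ n, a n ≤ C ^ n := by
    intro n
    induction n with
    | zero => simp [ha0]
    | succ n ih =>
      calc a (n+1) ≤ C * a n := hhigh n
        _ ≤ C * C ^ n := by nlinarith
        _ = C ^ (n+1) := by ring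
  have hCS : C ∈ S := ⟨hC, 1, one_pos, fun n => by simpa using haC n⟩
  have haδ : ∀ n, δ ^ n ≤ a n := by
    intro n
    induction n with
    | zero => simp [ha0]
    | succ n ih =>
      calc δ ^ (n+1) = δ * δ ^ n := by ring
        _ ≤ δ * a n := by nlinarith
        _ ≤ a (n+1) := hlow n
  have hlb : ∀ s ∈ S, δ ≤ s := by
    rintro s ⟨hs, K, hK, hKs⟩
    by_contra hlt
    push_neg at hlt
    have hratio : 1 < δ / s := (one_lt_div hs).2 hlt
    rcases pow_unbounded_of_one_lt K hratio with ⟨n, hn⟩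
    have h1 : δ ^ n ≤ K * s ^ n := le_trans (haδ n) (hKs n)
    have h2 : (δ / s) ^ n ≤ K := by
      rw [div_pow]
      rw [div_le_iff₀ (by positivity)]
      calc δ ^ n ≤ K * s ^ n := h1
        _ = K * s ^ n := rfl
    linarith
  have hSne : S.Nonempty := ⟨C, hCS⟩
  have hSbdd : BddBelow S := ⟨δ, hlb⟩
  set lam : ℝ := sInf S with hlam
  have hδlam : δ ≤ lam := le_csInf hSne hlb
  have hlamC : lam ≤ C := csInf_le hSbdd hCS
  have hlampos : 0 < lam := lt_of_lt_of_le hδ hδlam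
  -- (ii) upper bounds above lam
  have hub : ∀ t, lam < t → ∃ K : ℝ, 0 < K ∧ ∀ n, a n ≤ K * t ^ n := by
    intro t ht
    rcases exists_lt_of_csInf_lt hSne ht with ⟨s, hsS, hst⟩
    rcases hsS with ⟨hs, K, hK, hKs⟩
    exact ⟨K, hK, fun n => le_trans (hKs n)
      (by
        have : s ^ n ≤ t ^ n := pow_le_pow_left₀ hs.le hst.le n
        nlinarith)⟩
  -- (i) frequently a n > t ^ n for t < lam
  have hfreq : ∀ t, 0 < t → t < lam → ∀ N₀ : ℕ, ∃ n, N₀ ≤ n ∧ t ^ n < a n := by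
    intro t ht htlam N₀
    by_contra hcon
    push_neg at hcon
    -- then t ∈ S, contradicting t < sInf S
    have hsum_nonneg : 0 ≤ ∑ m ∈ Finset.range N₀, a m / t ^ m :=
      Finset.sum_nonneg fun m _ => div_nonneg (hpos m).le (by positivity)
    have : t ∈ S := by
      refine ⟨ht, 1 + ∑ m ∈ Finset.range N₀, a m / t ^ m, by linarith, fun n => ?_⟩
      by_cases hn : n < N₀
      · have h1 : a n / t ^ n ≤ ∑ m ∈ Finset.range N₀, a m / t ^ m :=
          Finset.single_le_sum (f := fun m => a m / t ^ m)
            (fun m _ => div_nonneg (hpos m).le (by positivity)) (Finset.mem_range.2 hn)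
        have h2 : a n = (a n / t ^ n) * t ^ n := by field_simp
        have htn : (0:ℝ) < t ^ n := by positivity
        rw [h2]
        nlinarith [mul_le_mul_of_nonneg_right h1 htn.le]
      · push_neg at hn
        have := hcon n hn
        nlinarith [pow_pos ht n]
    have := csInf_le hSbdd this
    rw [← hlam] at this
    linarith
  refine ⟨lam, hδlam, hlamC, ?_⟩
  intro ε hε B
  set x : ℝ := lam * (1 + ε / 2) / (1 + ε) with hx
  have hxpos : 0 < x := by positivity
  have hxlam : x < lam := by
    rw [hx, div_lt_iff₀ (by linarith)]
    nlinarith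
  have hgap : lam - x ≤ ε * lam := by
    have h1e : (0:ℝ) < 1 + ε := by linarith
    have heq : lam - lam * (1 + ε / 2) / (1 + ε) = lam * (ε / 2) / (1 + ε) := by
      field_simp
      ring
    rw [hx, heq, div_le_iff₀ h1e]
    nlinarith [mul_pos hlampos hε, mul_pos (mul_pos hlampos hε) hε]
  set t : ℕ → ℝ := fun m => a m / x ^ m with ht
  have htpos : ∀ m, 0 < t m := fun m => div_pos (hpos m) (pow_pos hxpos m)
  set M : ℕ → ℝ := fun N => ∑ m ∈ Finset.range (N + 1), t m with hM
  have hMpos : ∀ N, 0 < M N := fun N =>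
    Finset.sum_pos (fun m _ => htpos m) (by simp)
  have hMmono : ∀ {N N'}, N ≤ N' → M N ≤ M N' := by
    intro N N' h
    apply Finset.sum_le_sum_of_subset_of_nonneg
    · exact Finset.range_subset_range.2 (by omega)
    · exact fun m _ _ => (htpos m).le
  have hMsucc : ∀ N, M (N + 1) = M N + t (N + 1) := fun N => Finset.sum_range_succ _ _
  -- M is unbounded
  have hMunbdd : ∀ b : ℕ, ∃ N, (b : ℝ) ≤ M N := by
    intro b
    induction b with
    | zero => exact ⟨0, by simpa using (hMpos 0).le⟩
    | succ b ih =>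
      rcases ih with ⟨N, hN⟩
      rcases hfreq x hxpos hxlam (N + 1) with ⟨n, hn1, hn2⟩
      refine ⟨n, ?_⟩
      have htn1 : 1 < t n := by
        rw [ht]
        rw [lt_div_iff₀ (by positivity)]
        simpa using hn2
      have hsplit : M N + t n ≤ M n := by
        have hsub : insert n (Finset.range (N + 1)) ⊆ Finset.range (n + 1) := by
          intro m hm
          simp only [Finset.mem_insert, Finset.mem_range] at hm ⊢
          omega
        have hnotmem : n ∉ Finset.range (N + 1) := by simp; omega
        calc M N + t n = ∑ m ∈ insert n (Finset.range (N + 1)), t m := by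
              rw [Finset.sum_insert hnotmem]; ring
          _ ≤ M n := Finset.sum_le_sum_of_subset_of_nonneg hsub (fun m _ _ => (htpos m).le)
      push_cast
      linarith
  -- goodness happens infinitely often
  have hgood : ∀ N₀ : ℕ, ∃ N, N₀ ≤ N ∧ t (N + 1) ≤ ε * M N := by
    intro N₀
    by_contra hcon
    push_neg at hcon
    have hgrow : ∀ p : ℕ, (1 + ε) ^ p * M N₀ ≤ M (N₀ + p) := by
      intro p
      induction p with
      | zero => simp
      | succ p ih =>
        have h1 := hcon (N₀ + p) (by omega)
        have h2 := hMsucc (N₀ + p)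
        calc (1 + ε) ^ (p + 1) * M N₀ = (1 + ε) * ((1 + ε) ^ p * M N₀) := by ring
          _ ≤ (1 + ε) * M (N₀ + p) := by nlinarith [hMpos (N₀ + p)]
          _ = M (N₀ + p) + ε * M (N₀ + p) := by ring
          _ ≤ M (N₀ + p) + t (N₀ + p + 1) := by linarith [h1.le]
          _ = M (N₀ + p + 1) := (hMsucc (N₀ + p)).symm
    -- hence a n grows like (x (1+ε))^n
    set ν : ℝ := x * (1 + ε) with hν
    have hνeq : ν = lam * (1 + ε / 2) := by
      rw [hν, hx]
      field_simp
    have hνlam : lam < ν := by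
      rw [hνeq]
      nlinarith
    set tt : ℝ := lam * (1 + ε / 4) with htt
    have httlam : lam < tt := by
      rw [htt]
      nlinarith
    have httν : tt < ν := by
      rw [htt, hνeq]
      nlinarith
    rcases hub tt httlam with ⟨K, hK, hKt⟩
    set c4 : ℝ := ε * M N₀ * ((1 + ε) ^ (N₀ + 1))⁻¹ with hc4
    have hc4pos : 0 < c4 := by
      have := hMpos N₀; positivity
    have hlower : ∀ n, N₀ + 1 ≤ n → c4 * ν ^ n ≤ a n := by
      intro n hn
      obtain ⟨p, rfl⟩ : ∃ p, n = N₀ + p + 1 := ⟨n - N₀ - 1, by omega⟩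
      have h1 := hcon (N₀ + p) (by omega)
      have h2 := hgrow p
      have h3 : ε * ((1 + ε) ^ p * M N₀) ≤ t (N₀ + p + 1) := by
        nlinarith [hMpos (N₀ + p)]
      have h4 : a (N₀ + p + 1) = t (N₀ + p + 1) * x ^ (N₀ + p + 1) := by
        rw [ht]; field_simp
      rw [h4]
      have hxp : (0:ℝ) < x ^ (N₀ + p + 1) := by positivity
      have h5 : c4 * ν ^ (N₀ + p + 1) = ε * ((1 + ε) ^ p * M N₀) * x ^ (N₀ + p + 1) := by
        rw [hc4, hν, mul_pow]
        have h1e : (0:ℝ) < (1 + ε) ^ (N₀ + 1) := by positivity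
        field_simp
        ring
      rw [h5]
      nlinarith
    -- contradiction with upper bound at tt
    have hratio : 1 < ν / tt := (one_lt_div (by linarith)).2 httν
    rcases pow_unbounded_of_one_lt (K / c4) hratio with ⟨n₁, hn₁⟩
    set n := max n₁ (N₀ + 1) with hn
    have hmono : (ν / tt) ^ n₁ ≤ (ν / tt) ^ n :=
      pow_le_pow_right₀ (le_of_lt hratio) (le_max_left _ _)
    have h6 : c4 * ν ^ n ≤ K * tt ^ n := le_trans (hlower n (le_max_right _ _)) (hKt n)
    have httpos : 0 < tt := by linarith
    have h7 : (ν / tt) ^ n ≤ K / c4 := by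
      rw [div_pow, div_le_div_iff₀ (by positivity) hc4pos]
      nlinarith
    linarith
  -- combine: choose N with both properties
  rcases hMunbdd (Nat.ceil (max B 0)) with ⟨N₁, hN₁⟩
  rcases hgood N₁ with ⟨N, hNN₁, hNgood⟩
  refine ⟨x, N, hxpos, hxlam.le, hgap, ?_, ?_⟩
  · calc B ≤ max B 0 := le_max_left _ _
      _ ≤ (Nat.ceil (max B 0) : ℝ) := Nat.le_ceil _
      _ ≤ M N₁ := hN₁
      _ ≤ M N := hMmono hNN₁
  · exact hNgood

end SeqLemma

section Operator

variable {d : ℕ} {Q : Type} [Fintype Q]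

/-- abstract transfer operator -/
def Lop (T : Q → (ℕ → Fin d) → (ℕ → Fin d)) (w : Q → (ℕ → Fin d) → ℝ)
    (f : (ℕ → Fin d) → ℝ) (x : ℕ → Fin d) : ℝ :=
  ∑ q : Q, w q x * f (T q x)

lemma continuous_Lop {T : Q → (ℕ → Fin d) → (ℕ → Fin d)} {w : Q → (ℕ → Fin d) → ℝ}
    (hT : ∀ q, Continuous (T q)) (hw : ∀ q, Continuous (w q))
    {f : (ℕ → Fin d) → ℝ} (hf : Continuous f) : Continuous (Lop T w f) :=
  continuous_finset_sum _ fun q _ => (hw q).mul (hf.comp (hT q))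

/-- dual operator on measures -/
noncomputable def Lstar (T : Q → (ℕ → Fin d) → (ℕ → Fin d)) (w : Q → (ℕ → Fin d) → ℝ)
    (μ : Measure (ℕ → Fin d)) : Measure (ℕ → Fin d) :=
  ∑ q : Q, Measure.map (T q) (μ.withDensity fun y => ((w q y).toNNReal : ℝ≥0∞))

variable {T : Q → (ℕ → Fin d) → (ℕ → Fin d)} {w : Q → (ℕ → Fin d) → ℝ}

lemma isFiniteMeasure_component (hT : ∀ q, Continuous (T q)) (hw : ∀ q, Continuous (w q))
    {hi : ℝ} (hwhi : ∀ q y, w q y ≤ hi) (μ : Measure (ℕ → Fin d)) [IsFiniteMeasure μ] (q : Q) :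
    IsFiniteMeasure (Measure.map (T q) (μ.withDensity fun y => ((w q y).toNNReal : ℝ≥0∞))) := by
  constructor
  rw [Measure.map_apply (hT q).measurable MeasurableSet.univ, Set.preimage_univ,
    withDensity_apply _ MeasurableSet.univ]
  calc ∫⁻ y in Set.univ, ((w q y).toNNReal : ℝ≥0∞) ∂μ
      ≤ ∫⁻ _ in Set.univ, ENNReal.ofReal hi ∂μ := by
        apply lintegral_mono
        intro y
        rw [ENNReal.ofReal]
        exact ENNReal.coe_le_coe.2 (Real.toNNReal_mono (hwhi q y))
    _ = ENNReal.ofReal hi * μ Set.univ := by simp [setLIntegral_const, mul_comm]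
    _ < ∞ := ENNReal.mul_lt_top ENNReal.ofReal_lt_top (measure_lt_top μ _)

lemma isFiniteMeasure_Lstar (hT : ∀ q, Continuous (T q)) (hw : ∀ q, Continuous (w q))
    {hi : ℝ} (hwhi : ∀ q y, w q y ≤ hi) (μ : Measure (ℕ → Fin d)) [IsFiniteMeasure μ] :
    IsFiniteMeasure (Lstar T w μ) := by
  rw [Lstar]
  have : ∀ q : Q, IsFiniteMeasure
      (Measure.map (T q) (μ.withDensity fun y => ((w q y).toNNReal : ℝ≥0∞))) :=
    fun q => isFiniteMeasure_component hT hw hwhi μ q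
  infer_instance

lemma integral_Lstar (hT : ∀ q, Continuous (T q)) (hw : ∀ q, Continuous (w q))
    (hwpos : ∀ q y, 0 ≤ w q y) {hi : ℝ} (hwhi : ∀ q y, w q y ≤ hi)
    (μ : Measure (ℕ → Fin d)) [IsFiniteMeasure μ]
    {f : (ℕ → Fin d) → ℝ} (hf : Continuous f) :
    ∫ y, f y ∂(Lstar T w μ) = ∫ y, Lop T w f y ∂μ := by
  haveI : ∀ q : Q, IsFiniteMeasure
      (Measure.map (T q) (μ.withDensity fun y => ((w q y).toNNReal : ℝ≥0∞))) :=
    fun q => isFiniteMeasure_component hT hw hwhi μ q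
  rw [Lstar, integral_finset_sum_measure (fun q _ => cont_integrable hf _)]
  have hq : ∀ q : Q, ∫ y, f y ∂(Measure.map (T q) (μ.withDensity fun y =>
      ((w q y).toNNReal : ℝ≥0∞))) = ∫ y, w q y * f (T q y) ∂μ := by
    intro q
    rw [integral_map (hT q).aemeasurable hf.aestronglyMeasurable]
    rw [integral_withDensity_eq_integral_smul
      (f := fun y => (w q y).toNNReal)
      ((continuous_real_toNNReal.comp (hw q)).measurable) (fun y => f (T q y))]
    congr 1
    funext y
    rw [NNReal.smul_def, Real.coe_toNNReal _ (hwpos q y), smul_eq_mul]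
  simp_rw [hq]
  rw [← integral_finset_sum]
  · rfl
  · intro q _
    exact cont_integrable ((hw q).mul (hf.comp (hT q))) μ

lemma Lstar_mass (hT : ∀ q, Continuous (T q)) (hw : ∀ q, Continuous (w q))
    (hwpos : ∀ q y, 0 ≤ w q y) {hi : ℝ} (hwhi : ∀ q y, w q y ≤ hi)
    (μ : Measure (ℕ → Fin d)) [IsFiniteMeasure μ] :
    ((Lstar T w μ) Set.univ).toReal = ∫ y, Lop T w (fun _ => 1) y ∂μ := by
  have := integral_Lstar hT hw hwpos hwhi μ (continuous_const : Continuous fun _ : ℕ → Fin d => (1:ℝ))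
  rw [← this]
  haveI := isFiniteMeasure_Lstar hT hw hwhi μ
  simp
  rfl

end Operator

noncomputable def rho {d : ℕ} {Q : Type} [Fintype Q] (T : Q → (ℕ → Fin d) → (ℕ → Fin d))
    (w : Q → (ℕ → Fin d) → ℝ) (x₀ : ℕ → Fin d) : ℕ → Measure (ℕ → Fin d)
  | 0 => Measure.dirac x₀
  | (n+1) => Lstar T w (rho T w x₀ n)

section Main

variable {d : ℕ} {Q : Type} [Fintype Q] [Nonempty Q]
variable {T : Q → (ℕ → Fin d) → (ℕ → Fin d)} {w : Q → (ℕ → Fin d) → ℝ}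

set_option maxHeartbeats 1000000 in
theorem main_abstract (hd : 0 < d)
    (hT : ∀ q, Continuous (T q)) (hw : ∀ q, Continuous (w q))
    {lo hi : ℝ} (hlo : 0 < lo) (hwlo : ∀ q y, lo ≤ w q y) (hwhi : ∀ q y, w q y ≤ hi) :
    ∃ (lam : ℝ) (M : Measure (ℕ → Fin d)), 0 < lam ∧ IsProbabilityMeasure M ∧
      ∀ f : (ℕ → Fin d) → ℝ, Continuous f →
        ∫ x, Lop T w f x ∂M = lam * ∫ x, f x ∂M := by
  classical
  have hwpos : ∀ q y, 0 ≤ w q y := fun q y => le_trans hlo.le (hwlo q y)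
  set x₀ : ℕ → Fin d := fun _ => ⟨0, hd⟩ with hx₀
  set ρ : ℕ → Measure (ℕ → Fin d) := rho T w x₀ with hρ
  have hfin : ∀ n, IsFiniteMeasure (ρ n) := by
    intro n
    induction n with
    | zero => show IsFiniteMeasure (Measure.dirac x₀); infer_instance
    | succ n ih => exact isFiniteMeasure_Lstar hT hw hwhi (ρ n)
  set a : ℕ → ℝ := fun n => ((ρ n) Set.univ).toReal with ha
  have ha0 : a 0 = 1 := by
    show ((Measure.dirac x₀) Set.univ).toReal = 1
    simp
  set κ : ℝ := (Fintype.card Q : ℝ) with hκ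
  have hκ1 : 1 ≤ κ := by
    rw [hκ]
    exact_mod_cast Fintype.card_pos
  have hLop1 : ∀ y, κ * lo ≤ Lop T w (fun _ => 1) y ∧ Lop T w (fun _ => 1) y ≤ κ * hi := by
    intro y
    constructor
    · calc κ * lo = ∑ _q : Q, lo := by
            rw [Finset.sum_const, hκ]; simp [mul_comm]
        _ ≤ ∑ q : Q, w q y * 1 := Finset.sum_le_sum fun q _ => by
            simpa using hwlo q y
        _ = Lop T w (fun _ => 1) y := rfl
    · calc Lop T w (fun _ => 1) y = ∑ q : Q, w q y * 1 := rfl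
        _ ≤ ∑ _q : Q, hi := Finset.sum_le_sum fun q _ => by simpa using hwhi q y
        _ = κ * hi := by rw [Finset.sum_const, hκ]; simp [mul_comm]
  have hstep : ∀ n, a (n + 1) = ∫ y, Lop T w (fun _ => 1) y ∂(ρ n) := by
    intro n
    haveI := hfin n
    exact Lstar_mass hT hw hwpos hwhi (ρ n)
  have hbounds : ∀ n, κ * lo * a n ≤ a (n + 1) ∧ a (n + 1) ≤ κ * hi * a n := by
    intro n
    haveI := hfin n
    have hintL : Integrable (Lop T w (fun _ => 1)) (ρ n) :=
      cont_integrable (continuous_Lop hT hw continuous_const) (ρ n)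
    constructor
    · rw [hstep n]
      calc κ * lo * a n = ∫ _y, κ * lo ∂(ρ n) := by
            rw [integral_const, smul_eq_mul, measureReal_def]; ring
        _ ≤ ∫ y, Lop T w (fun _ => 1) y ∂(ρ n) :=
            integral_mono (integrable_const _) hintL (fun y => (hLop1 y).1)
    · rw [hstep n]
      calc ∫ y, Lop T w (fun _ => 1) y ∂(ρ n) ≤ ∫ _y, κ * hi ∂(ρ n) :=
            integral_mono hintL (integrable_const _) (fun y => (hLop1 y).2)
        _ = κ * hi * a n := by rw [integral_const, smul_eq_mul, measureReal_def]; ring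
  have hpos : ∀ n, 0 < a n := by
    intro n
    induction n with
    | zero => rw [ha0]; norm_num
    | succ n ih =>
      have := (hbounds n).1
      nlinarith [mul_pos (lt_of_lt_of_le hlo (by nlinarith : lo ≤ κ * lo)) ih]
  have hδ : 0 < κ * lo := by nlinarith
  rcases seq_lemma hδ ha0 hpos (fun n => (hbounds n).1) (fun n => (hbounds n).2) with
    ⟨lam, hδlam, hlamC, hmain⟩
  have hlampos : 0 < lam := lt_of_lt_of_le hδ hδlam
  -- choose approximants
  have hchoice : ∀ k : ℕ, ∃ (x : ℝ) (N : ℕ),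
      0 < x ∧ x ≤ lam ∧ lam - x ≤ (1 / ((k : ℝ) + 1)) * lam ∧
      ((k : ℝ) + 1) ≤ (∑ m ∈ Finset.range (N + 1), a m / x ^ m) ∧
      a (N + 1) / x ^ (N + 1) ≤ (1 / ((k : ℝ) + 1)) * ∑ m ∈ Finset.range (N + 1), a m / x ^ m :=
    fun k => hmain (1 / ((k : ℝ) + 1)) (by positivity) ((k : ℝ) + 1)
  choose xs Ns hxpos hxle hxgap hMkB hgood using hchoice
  set Mk : ℕ → ℝ := fun k => ∑ m ∈ Finset.range (Ns k + 1), a m / xs k ^ m with hMk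
  have hMkpos : ∀ k, 0 < Mk k := fun k => lt_of_lt_of_le (by positivity) (hMkB k)
  -- the approximating probability measures
  set P : ℕ → Measure (ℕ → Fin d) := fun k => (ENNReal.ofReal (Mk k))⁻¹ •
    ∑ m ∈ Finset.range (Ns k + 1), (ENNReal.ofReal ((xs k ^ m)⁻¹)) • ρ m with hP
  have hsum_univ : ∀ k, (∑ m ∈ Finset.range (Ns k + 1),
      (ENNReal.ofReal ((xs k ^ m)⁻¹)) • ρ m) Set.univ = ENNReal.ofReal (Mk k) := by
    intro k
    rw [Measure.finset_sum_apply]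
    have : ∀ m ∈ Finset.range (Ns k + 1),
        ((ENNReal.ofReal ((xs k ^ m)⁻¹)) • ρ m) Set.univ = ENNReal.ofReal (a m / xs k ^ m) := by
      intro m _
      haveI := hfin m
      rw [Measure.smul_apply, smul_eq_mul]
      have h1 : (ρ m) Set.univ = ENNReal.ofReal (a m) := by
        rw [ha]
        exact (ENNReal.ofReal_toReal (measure_ne_top _ _)).symm
      rw [h1, ← ENNReal.ofReal_mul (inv_nonneg.2 (pow_nonneg (hxpos k).le m))]
      congr 1
      field_simp
    rw [Finset.sum_congr rfl this, ← ENNReal.ofReal_sum_of_nonneg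
      (fun m _ => div_nonneg (hpos m).le (pow_nonneg (hxpos k).le m))]
  have hProb : ∀ k, IsProbabilityMeasure (P k) := by
    intro k
    constructor
    rw [hP]
    simp only [Measure.smul_apply, smul_eq_mul]
    rw [hsum_univ k]
    exact ENNReal.inv_mul_cancel (by simp [hMkpos k]) ENNReal.ofReal_ne_top
  -- integral formula
  have hintP : ∀ k, ∀ g : (ℕ → Fin d) → ℝ, Continuous g →
      ∫ y, g y ∂(P k) = (Mk k)⁻¹ *
        ∑ m ∈ Finset.range (Ns k + 1), (xs k ^ m)⁻¹ * ∫ y, g y ∂(ρ m) := by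
    intro k g hg
    rw [hP]
    simp only
    rw [integral_smul_measure]
    rw [integral_finset_sum_measure (by
      intro m _
      haveI := hfin m
      refine (integrable_smul_measure ?_ ENNReal.ofReal_ne_top).2 (cont_integrable hg _)
      simp only [ne_eq, ENNReal.ofReal_eq_zero, not_le]
      exact inv_pos.2 (pow_pos (hxpos k) m))]
    rw [ENNReal.toReal_inv, ENNReal.toReal_ofReal (hMkpos k).le, smul_eq_mul]
    congr 1
    apply Finset.sum_congr rfl
    intro m _
    rw [integral_smul_measure,
      ENNReal.toReal_ofReal (inv_nonneg.2 (pow_nonneg (hxpos k).le m)), smul_eq_mul]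
  -- adjoint identity on the iterates
  have hADJ : ∀ m, ∀ f : (ℕ → Fin d) → ℝ, Continuous f →
      ∫ y, f y ∂(ρ (m + 1)) = ∫ y, Lop T w f y ∂(ρ m) := by
    intro m f hf
    haveI := hfin m
    exact integral_Lstar hT hw hwpos hwhi (ρ m) hf
  -- the weak limit
  set U : Ultrafilter ℕ := Ultrafilter.of Filter.atTop with hU
  have hUle : (U : Filter ℕ) ≤ Filter.atTop := Ultrafilter.of_le _
  rcases exists_weakLimit hd U P hProb with ⟨M, hMprob, hconv⟩
  refine ⟨lam, M, hlampos, hMprob, ?_⟩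
  intro f hf
  -- a uniform bound for f
  set F := BoundedContinuousFunction.mkOfCompact (⟨f, hf⟩ : C(ℕ → Fin d, ℝ)) with hF
  set Cf : ℝ := ‖F‖ with hCf
  have hCf0 : 0 ≤ Cf := norm_nonneg _
  have hfb : ∀ y, |f y| ≤ Cf := fun y => by
    have := F.norm_coe_le_norm y
    rw [Real.norm_eq_abs] at this
    exact this
  have hIb : ∀ m, |∫ y, f y ∂(ρ m)| ≤ Cf * a m := by
    intro m
    haveI := hfin m
    have := norm_integral_le_of_norm_le_const (μ := ρ m) (f := f) (C := Cf)
      (Filter.Eventually.of_forall fun y => by simpa [Real.norm_eq_abs] using hfb y)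
    simpa [Real.norm_eq_abs, ha, measureReal_def] using this
  -- error estimate
  have herr : ∀ k, |∫ y, Lop T w f y ∂(P k) - xs k * ∫ y, f y ∂(P k)|
      ≤ 2 * Cf * lam * (1 / ((k : ℝ) + 1)) := by
    intro k
    set x := xs k with hxk
    set N := Ns k with hNk
    set J : ℕ → ℝ := fun m => (x ^ m)⁻¹ * ∫ y, f y ∂(ρ m) with hJ
    have hA : ∫ y, Lop T w f y ∂(P k) = (Mk k)⁻¹ * (x * ∑ m ∈ Finset.range (N + 1), J (m + 1)) := by
      rw [hintP k _ (continuous_Lop hT hw hf)]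
      congr 1
      rw [Finset.mul_sum]
      apply Finset.sum_congr rfl
      intro m _
      rw [← hADJ m f hf]
      simp only [hJ]
      have hxm : (0:ℝ) < x ^ m := pow_pos (hxpos k) m
      have : x * ((x ^ (m+1))⁻¹ * ∫ y, f y ∂(ρ (m+1)))
          = (x ^ m)⁻¹ * ∫ y, f y ∂(ρ (m+1)) := by
        have hx0 : x ≠ 0 := (hxpos k).ne'
        rw [pow_succ]
        field_simp
      rw [this]
    have hB : xs k * ∫ y, f y ∂(P k) = (Mk k)⁻¹ * (x * ∑ m ∈ Finset.range (N + 1), J m) := by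
      rw [hintP k f hf]
      simp only [hJ]
      ring
    rw [hA, hB, ← mul_sub, ← mul_sub, abs_mul, abs_mul]
    have htel : (∑ m ∈ Finset.range (N + 1), J (m + 1)) - ∑ m ∈ Finset.range (N + 1), J m
        = J (N + 1) - J 0 := by
      have h1 : ∑ m ∈ Finset.range (N + 2), J m
          = (∑ m ∈ Finset.range (N + 1), J (m + 1)) + J 0 := Finset.sum_range_succ' J (N + 1)
      have h2 : ∑ m ∈ Finset.range (N + 2), J m
          = (∑ m ∈ Finset.range (N + 1), J m) + J (N + 1) := Finset.sum_range_succ J (N + 1)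
      linarith
    rw [htel]
    have hJN : |J (N + 1)| ≤ Cf * (1 / ((k : ℝ) + 1)) * Mk k := by
      simp only [hJ]
      rw [abs_mul]
      have h1 : |(x ^ (N+1))⁻¹| = (x ^ (N+1))⁻¹ := abs_of_pos (inv_pos.2 (pow_pos (hxpos k) _))
      rw [h1]
      calc (x ^ (N+1))⁻¹ * |∫ y, f y ∂(ρ (N+1))| ≤ (x ^ (N+1))⁻¹ * (Cf * a (N+1)) := by
            apply mul_le_mul_of_nonneg_left (hIb (N+1)) (inv_nonneg.2 (pow_nonneg (hxpos k).le _))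
        _ = Cf * (a (N+1) / x ^ (N+1)) := by rw [div_eq_mul_inv]; ring
        _ ≤ Cf * ((1 / ((k : ℝ) + 1)) * Mk k) := by
            apply mul_le_mul_of_nonneg_left _ hCf0
            exact hgood k
        _ = Cf * (1 / ((k : ℝ) + 1)) * Mk k := by ring
    have hJ0 : |J 0| ≤ Cf * (1 / ((k : ℝ) + 1)) * Mk k := by
      simp only [hJ, pow_zero, inv_one, one_mul]
      calc |∫ y, f y ∂(ρ 0)| ≤ Cf * a 0 := hIb 0
        _ = Cf := by rw [ha0]; ring
        _ ≤ Cf * ((1 / ((k : ℝ) + 1)) * ((k : ℝ) + 1)) := by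
            rw [one_div_mul_cancel (by positivity)]; simp
        _ ≤ Cf * ((1 / ((k : ℝ) + 1)) * Mk k) := by
            apply mul_le_mul_of_nonneg_left _ hCf0
            apply mul_le_mul_of_nonneg_left (hMkB k) (by positivity)
        _ = Cf * (1 / ((k : ℝ) + 1)) * Mk k := by ring
    have hJdiff : |J (N + 1) - J 0| ≤ 2 * Cf * (1 / ((k : ℝ) + 1)) * Mk k := by
      calc |J (N + 1) - J 0| ≤ |J (N+1)| + |J 0| := by
            have := abs_add_le (J (N+1)) (-J 0)
            simpa [sub_eq_add_neg] using this
        _ ≤ 2 * Cf * (1 / ((k : ℝ) + 1)) * Mk k := by linarith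
    have hMkinv : |(Mk k)⁻¹| = (Mk k)⁻¹ := abs_of_pos (inv_pos.2 (hMkpos k))
    have hxabs : |x| = x := abs_of_pos (hxpos k)
    rw [hMkinv, hxabs]
    calc (Mk k)⁻¹ * (x * |J (N + 1) - J 0|)
        ≤ (Mk k)⁻¹ * (x * (2 * Cf * (1 / ((k : ℝ) + 1)) * Mk k)) := by
          apply mul_le_mul_of_nonneg_left _ (inv_nonneg.2 (hMkpos k).le)
          exact mul_le_mul_of_nonneg_left hJdiff (hxpos k).le
      _ = (Mk k)⁻¹ * Mk k * (x * (2 * Cf * (1 / ((k : ℝ) + 1)))) := by ring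
      _ = x * (2 * Cf * (1 / ((k : ℝ) + 1))) := by
          rw [inv_mul_cancel₀ (hMkpos k).ne']
          ring
      _ ≤ lam * (2 * Cf * (1 / ((k : ℝ) + 1))) := by
          apply mul_le_mul_of_nonneg_right (hxle k) (by positivity)
      _ = 2 * Cf * lam * (1 / ((k : ℝ) + 1)) := by ring
  -- limits
  have hk0 : Filter.Tendsto (fun k : ℕ => 1 / ((k : ℝ) + 1)) Filter.atTop (𝓝 0) :=
    tendsto_one_div_add_atTop_nhds_zero_nat
  have hxs_tendsto : Filter.Tendsto xs Filter.atTop (𝓝 lam) := by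
    have hup : ∀ k, xs k ≤ lam := hxle
    have hdn : ∀ k : ℕ, lam - lam * (1 / ((k : ℝ) + 1)) ≤ xs k := by
      intro k
      have := hxgap k
      linarith [hxgap k]
    have hlow : Filter.Tendsto (fun k : ℕ => lam - lam * (1 / ((k : ℝ) + 1)))
        Filter.atTop (𝓝 lam) := by
      have : Filter.Tendsto (fun k : ℕ => lam * (1 / ((k : ℝ) + 1))) Filter.atTop (𝓝 0) := by
        simpa using hk0.const_mul lam
      simpa using (tendsto_const_nhds (x := lam)).sub this
    exact tendsto_of_tendsto_of_tendsto_of_le_of_le hlow tendsto_const_nhds hdn hup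
  have herr_tendsto : Filter.Tendsto
      (fun k => ∫ y, Lop T w f y ∂(P k) - xs k * ∫ y, f y ∂(P k)) Filter.atTop (𝓝 0) := by
    apply squeeze_zero_norm (fun k => by simpa [Real.norm_eq_abs] using herr k)
    simpa using hk0.const_mul (2 * Cf * lam)
  have h1 : Filter.Tendsto (fun k => ∫ y, f y ∂(P k)) ↑U (𝓝 (∫ y, f y ∂M)) := hconv f hf
  have h2 : Filter.Tendsto (fun k => ∫ y, Lop T w f y ∂(P k)) ↑U
      (𝓝 (∫ y, Lop T w f y ∂M)) := hconv _ (continuous_Lop hT hw hf)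
  have h3 : Filter.Tendsto (fun k => ∫ y, Lop T w f y ∂(P k)) ↑U
      (𝓝 (0 + lam * ∫ y, f y ∂M)) := by
    have := (herr_tendsto.mono_left hUle).add ((hxs_tendsto.mono_left hUle).mul h1)
    apply this.congr
    intro k
    ring
  have := tendsto_nhds_unique h2 h3
  rw [this]
  ring

end Main

lemma continuous_cons {d : ℕ} (j : Fin d) : Continuous (cons j) := by
  apply continuous_pi
  intro n
  cases n with
  | zero => exact continuous_const
  | succ m => exact continuous_apply m

end HRaux

set_option maxHeartbeats 1000000 in
theorem exists_eigenmeasure_haarRuelle {d k : ℕ} (hd : 0 < d) (hk : 0 < k)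
    (ψ : (ℕ → Fin d) → Fin k → (ℕ → Fin d))
    (hψ : ∀ i : Fin k, Continuous fun x => ψ x i)
    (c : (ℕ → Fin d) → (ℕ → Fin d) → ℝ)
    (hc : Continuous fun p : (ℕ → Fin d) × (ℕ → Fin d) => c p.1 p.2)
    (β : ℝ) :
    ∃ (lam : ℝ) (M : Measure (ℕ → Fin d)),
      0 < lam ∧ IsProbabilityMeasure M ∧
      (∀ f : (ℕ → Fin d) → ℝ, Continuous f →
          ∫ x, haarRuelle ψ c β f x ∂M = lam * ∫ x, f x ∂M) ∧
      lam = ∫ x, haarRuelle ψ c β (fun _ => 1) x ∂M := by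
  classical
  haveI : Nonempty (Fin d × Fin k) := ⟨⟨⟨0, hd⟩, ⟨0, hk⟩⟩⟩
  set T : (Fin d × Fin k) → (ℕ → Fin d) → (ℕ → Fin d) :=
    fun q x => ψ (cons q.1 x) q.2 with hT_def
  set w : (Fin d × Fin k) → (ℕ → Fin d) → ℝ :=
    fun q x => (1 / (d : ℝ)) * Real.exp (-β * c (cons q.1 x) (ψ (cons q.1 x) q.2)) with hw_def
  have hT : ∀ q, Continuous (T q) := fun q =>
    (hψ q.2).comp (HRaux.continuous_cons q.1)
  have hcomp : ∀ q : Fin d × Fin k,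
      Continuous (fun x => c (cons q.1 x) (ψ (cons q.1 x) q.2)) := by
    intro q
    exact hc.comp ((HRaux.continuous_cons q.1).prodMk
      ((hψ q.2).comp (HRaux.continuous_cons q.1)))
  have hw : ∀ q, Continuous (w q) := by
    intro q
    exact continuous_const.mul (Real.continuous_exp.comp
      (continuous_const.mul (hcomp q)))
  -- uniform bounds on the weights
  set G := BoundedContinuousFunction.mkOfCompact
    (⟨fun p : (ℕ → Fin d) × (ℕ → Fin d) => -β * c p.1 p.2, continuous_const.mul hc⟩ :
      C((ℕ → Fin d) × (ℕ → Fin d), ℝ)) with hG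
  set B := ‖G‖ with hB
  have hGb : ∀ p : (ℕ → Fin d) × (ℕ → Fin d), |(-β) * c p.1 p.2| ≤ B := by
    intro p
    have h := G.norm_coe_le_norm p
    have heq : G p = -β * c p.1 p.2 := rfl
    rw [heq, Real.norm_eq_abs] at h
    exact h
  have hdpos : (0:ℝ) < 1 / (d : ℝ) := by
    have : (0:ℝ) < (d:ℝ) := by exact_mod_cast hd
    positivity
  set lo : ℝ := (1 / (d : ℝ)) * Real.exp (-B) with hlo_def
  set hi : ℝ := (1 / (d : ℝ)) * Real.exp B with hhi_def
  have hlo : 0 < lo := by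
    rw [hlo_def]; positivity
  have hwlo : ∀ q y, lo ≤ w q y := by
    intro q y
    rw [hlo_def, hw_def]
    have h1 := hGb (cons q.1 y, ψ (cons q.1 y) q.2)
    have h2 : -B ≤ -β * c (cons q.1 y) (ψ (cons q.1 y) q.2) := by
      have := abs_le.1 h1
      simpa using this.1
    exact mul_le_mul_of_nonneg_left (Real.exp_le_exp.2 h2) hdpos.le
  have hwhi : ∀ q y, w q y ≤ hi := by
    intro q y
    rw [hhi_def, hw_def]
    have h1 := hGb (cons q.1 y, ψ (cons q.1 y) q.2)
    have h2 : -β * c (cons q.1 y) (ψ (cons q.1 y) q.2) ≤ B := by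
      have := abs_le.1 h1
      simpa using this.2
    exact mul_le_mul_of_nonneg_left (Real.exp_le_exp.2 h2) hdpos.le
  -- identification of the operator
  have hLop : ∀ (f : (ℕ → Fin d) → ℝ) (x : ℕ → Fin d),
      HRaux.Lop T w f x = haarRuelle ψ c β f x := by
    intro f x
    rw [haarRuelle, HRaux.Lop, Fintype.sum_prod_type, Finset.mul_sum]
    apply Finset.sum_congr rfl
    intro j _
    rw [Finset.mul_sum]
    apply Finset.sum_congr rfl
    intro i _
    rw [hw_def, hT_def]
    ring
  rcases HRaux.main_abstract hd hT hw hlo hwlo hwhi with ⟨lam, M, hlampos, hMprob, heig⟩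
  have heig' : ∀ f : (ℕ → Fin d) → ℝ, Continuous f →
      ∫ x, haarRuelle ψ c β f x ∂M = lam * ∫ x, f x ∂M := by
    intro f hf
    rw [← heig f hf]
    apply integral_congr_ae
    exact Filter.Eventually.of_forall (fun x => (hLop f x).symm)
  refine ⟨lam, M, hlampos, hMprob, heig', ?_⟩
  have := heig' (fun _ => 1) continuous_const
  rw [this]
  haveI := hMprob
  simp
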